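/- Let P ⊂ ℝⁿ be a compact convex set with nonempty interior and support function F_P. Let F, F₀ : ℝⁿ → ℝ be convex functions whose subgradient images ∇F(ℝⁿ) and ∇F₀(ℝⁿ) are contained in P, let G be the Legendre transform of F, and suppose that C_P := sup_{x ∈ ℝⁿ} (F_P(x) − F₀(x)) < +∞ and that |G| is Lebesgue integrable on P. Then sup_{x ∈ ℝⁿ} (F(x) − F₀(x)) ≤ C_P + (1 / ((2^{1/(n+1)} − 1) · vol(P))) · ∫_P |G(s)| ds. -/

import Mathlib

open MeasureTheory Filter Topology RealInnerProductSpace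
open Set

variable {n : ℕ}

local notation "E'" => EuclideanSpace ℝ (Fin n)

lemma exists_subgradient (F : E' → ℝ) (hF : ConvexOn ℝ Set.univ F) (x : E') :
    ∃ s : E', ∀ y, F x + ⟪y - x, s⟫ ≤ F y := by
  have hcont : Continuous F := by
    rw [← continuousOn_univ]
    exact hF.continuousOn isOpen_univ
  set S : Set (E' × ℝ) := {p | F p.1 < p.2} with hS
  have hSconv : Convex ℝ S := by
    intro p hp q hq a b ha hb hab
    simp only [hS, Set.mem_setOf_eq] at hp hq ⊢
    calc F (a • p.1 + b • q.1) ≤ a * F p.1 + b * F q.1 :=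
          hF.2 (Set.mem_univ _) (Set.mem_univ _) ha hb hab
      _ < a * p.2 + b * q.2 := by
          rcases eq_or_lt_of_le ha with h | h
          · have hb1 : b = 1 := by linarith
            simp [← h, hb1]; linarith [hq]
          · rcases eq_or_lt_of_le hb with h' | h'
            · have ha1 : a = 1 := by linarith
              simp [← h', ha1]; linarith [hp]
            · have := mul_lt_mul_of_pos_left hp h
              have := mul_lt_mul_of_pos_left hq h'
              linarith
      _ = (a • p + b • q).2 := rfl
  have hSopen : IsOpen S := isOpen_lt (hcont.comp continuous_fst) continuous_snd
  have hxS : (x, F x) ∉ S := by simp [hS]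
  obtain ⟨f, hf⟩ := geometric_hahn_banach_open_point hSconv hSopen hxS
  set c : ℝ := f (0, 1) with hc
  set g : E' → ℝ := fun y => f (y, 0) with hg
  have hfsplit : ∀ (y : E') (r : ℝ), f (y, r) = g y + r * c := by
    intro y r
    have : (y, r) = (y, (0:ℝ)) + r • ((0:E'), (1:ℝ)) := by
      simp [Prod.ext_iff]
    rw [this, map_add, f.map_smul, smul_eq_mul]
  have hfx : ∀ p ∈ S, f p < g x + F x * c := by
    intro p hp
    have := hf p hp
    rwa [hfsplit x (F x)] at this
  have hclt : c < 0 := by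
    have h1 : ((x, F x + 1) : E' × ℝ) ∈ S := by simp [hS]
    have := hfx _ h1
    rw [hfsplit] at this
    linarith
  have key : ∀ y, g y + F y * c ≤ g x + F x * c := by
    intro y
    by_contra hcon
    push_neg at hcon
    set ε : ℝ := (g y + F y * c - (g x + F x * c)) / (2 * (-c)) with hε
    have hεpos : 0 < ε := by
      apply div_pos (by linarith) (by linarith)
    have hmem : ((y, F y + ε) : E' × ℝ) ∈ S := by
      simp [hS]; linarith
    have := hfx _ hmem
    rw [hfsplit] at this
    have hεc : ε * c = -((g y + F y * c - (g x + F x * c)) / 2) := by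
      rw [hε, div_mul_eq_mul_div, div_eq_iff (show (2:ℝ) * -c ≠ 0 by nlinarith)]
      ring
    have hexp : (F y + ε) * c = F y * c + ε * c := by ring
    rw [hexp, hεc] at this
    linarith
  refine ⟨(InnerProductSpace.toDual ℝ E').symm
    ((-c⁻¹) • (f.comp (ContinuousLinearMap.inl ℝ E' ℝ))), fun y => ?_⟩
  rw [real_inner_comm, InnerProductSpace.toDual_symm_apply]
  have hL : (f.comp (ContinuousLinearMap.inl ℝ E' ℝ)) (y - x) = g y - g x := by
    simp only [ContinuousLinearMap.comp_apply, ContinuousLinearMap.inl_apply]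
    rw [show ((y - x, (0:ℝ)) : E' × ℝ) = (y, (0:ℝ)) - (x, 0) by simp [Prod.ext_iff],
      map_sub]
  have hgsub : ((-c⁻¹) • (f.comp (ContinuousLinearMap.inl ℝ E' ℝ))) (y - x)
      = -c⁻¹ * (g y - g x) := by
    rw [ContinuousLinearMap.smul_apply, hL, smul_eq_mul]
  rw [hgsub]
  have hky := key y
  have hc0 : c ≠ 0 := ne_of_lt hclt
  have hcinv : c⁻¹ < 0 := inv_lt_zero.mpr hclt
  have h1 : g y - g x ≤ c * (F x - F y) := by linarith [hky]; 
  have h3 : c⁻¹ * (c * (F x - F y)) ≤ c⁻¹ * (g y - g x) :=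
    mul_le_mul_of_nonpos_left h1 (le_of_lt hcinv)
  rw [← mul_assoc, inv_mul_cancel₀ hc0, one_mul] at h3
  linarith


lemma abs_lower (z : EReal) (c : ℝ) (h : z ≤ (c:EReal)) :
    ENNReal.ofReal (-c) ≤ z.abs := by
  induction z using EReal.rec with
  | bot => simp
  | coe d =>
      rw [EReal.abs_def]
      rw [EReal.coe_le_coe_iff] at h
      exact ENNReal.ofReal_le_ofReal ((neg_le_neg h).trans (neg_le_abs d))
  | top => exact absurd h (by simp)

lemma measure_key (P : Set E') (hPc : IsCompact P) (hPconv : Convex ℝ P)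
    (G : E' → EReal) (hGmeas : Measurable G)
    (hGbot : ∀ s, (⊥:EReal) < G s)
    (hGconv : ∀ (a b : E') (A B θ : ℝ), 0 ≤ θ → θ ≤ 1 → G a ≤ (A:EReal) → G b ≤ (B:EReal) →
      G (θ • a + (1-θ) • b) ≤ ((θ*A + (1-θ)*B : ℝ) : EReal))
    (s₀ : E') (hs₀P : s₀ ∈ P) (M : ℝ) (hM : 0 < M) (hGs₀ : G s₀ ≤ ((-M : ℝ) : EReal))
    (t : ℝ) (ht : 0 < t) (hpow : ((1+t) : ℝ)^(n+1) = (2:ℝ)) :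
    ENNReal.ofReal M * (ENNReal.ofReal t * volume P) ≤ ∫⁻ s in P, (G s).abs ∂volume := by
  classical
  set N : Set E' := P ∩ G ⁻¹' (Iic 0) with hN
  have hNP : N ⊆ P := inter_subset_left
  have hNmeas : MeasurableSet N :=
    hPc.measurableSet.inter (hGmeas measurableSet_Iic)
  set H : ℝ → E' → E' := fun r b => r • (b - s₀) + s₀ with hH
  have halg : ∀ (v : ℝ) (b : E'), H v b = v • b + (1-v) • s₀ := by
    intro v b
    rw [hH]
    simp only [smul_sub, sub_smul, one_smul]
    abel
  -- membership in the homothety image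
  have hmem_iff : ∀ (r : ℝ), r ≠ 0 → ∀ s : E', (s ∈ H r '' N ↔ H r⁻¹ s ∈ N) := by
    intro r hr s
    constructor
    · rintro ⟨b, hb, rfl⟩
      have : H r⁻¹ (H r b) = b := by
        rw [hH]
        simp only [add_sub_cancel_right]
        rw [smul_smul, inv_mul_cancel₀ hr, one_smul]
        abel
      rwa [this]
    · intro hmem
      refine ⟨H r⁻¹ s, hmem, ?_⟩
      rw [hH]
      simp only [add_sub_cancel_right, smul_smul, mul_inv_cancel₀ hr, one_smul]
      abel
  -- star-shapedness of N about s₀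
  have hstar : ∀ b ∈ N, ∀ v : ℝ, 0 ≤ v → v ≤ 1 → H v b ∈ N := by
    intro b hb v hv0 hv1
    have hbP : b ∈ P := hb.1
    have hbG : G b ≤ ((0:ℝ) : EReal) := by
      have := hb.2; simpa [EReal.coe_zero] using this
    constructor
    · rw [halg]
      exact hPconv hbP hs₀P hv0 (by linarith) (by ring)
    · rw [halg]
      simp only [mem_preimage, mem_Iic]
      refine le_trans (hGconv b s₀ 0 (-M) v hv0 hv1 hbG hGs₀) ?_
      rw [show ((0:EReal)) = ((0:ℝ):EReal) from rfl, EReal.coe_le_coe_iff]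
      nlinarith
  have hsub1 : ∀ v : ℝ, 0 ≤ v → v ≤ 1 → H v '' N ⊆ N := by
    rintro v h0 h1 s ⟨b, hb, rfl⟩; exact hstar b hb v h0 h1
  have hsub2 : ∀ w : ℝ, 1 ≤ w → N ⊆ H w '' N := by
    intro w hw b hb
    have hw0 : w ≠ 0 := by linarith
    rw [hmem_iff w hw0]
    exact hstar b hb w⁻¹ (by positivity) (by
      rw [inv_le_one_iff₀]; right; exact hw)
  -- volume of homothety images
  have hvolH : ∀ v : ℝ, 0 ≤ v → volume (H v '' N) = ENNReal.ofReal (v^n) * volume N := by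
    intro v hv
    have himg : H v '' N = AffineMap.homothety s₀ v '' N := by
      refine image_congr fun b _ => ?_
      rw [hH, AffineMap.homothety_apply, vsub_eq_sub, vadd_eq_add]
    rw [himg, Measure.addHaar_image_homothety, finrank_euclideanSpace_fin,
      abs_of_nonneg (pow_nonneg hv n)]
  -- pointwise value bounds
  have hval1 : ∀ v ∈ Ioo (0:ℝ) 1, ∀ s ∈ H v '' N,
      ENNReal.ofReal ((1-v)*M) ≤ (G s).abs := by
    rintro v hv s ⟨b, hb, rfl⟩
    have hbG : G b ≤ ((0:ℝ) : EReal) := by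
      have := hb.2; simpa [EReal.coe_zero] using this
    rw [halg, show (1-v)*M = -(v*0 + (1-v)*(-M)) by ring]
    exact abs_lower _ _ (hGconv b s₀ 0 (-M) v hv.1.le hv.2.le hbG hGs₀)
  have hval2 : ∀ w ∈ Ioo (1:ℝ) (1+t), ∀ s ∈ P, s ∉ H w '' N →
      ENNReal.ofReal ((w-1)*M) ≤ (G s).abs := by
    intro w hw s hsP hsnot
    have hw1 : (1:ℝ) < w := hw.1
    have hw0 : (0:ℝ) < w := by linarith
    have hw0' : w ≠ 0 := ne_of_gt hw0
    have hwinv1 : w⁻¹ ≤ 1 := by rw [inv_le_one_iff₀]; right; exact hw1.le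
    have hbP : H w⁻¹ s ∈ P := by
      rw [halg]
      exact hPconv hsP hs₀P (by positivity) (by linarith) (by ring)
    have hbG : ¬ (G (H w⁻¹ s) ≤ ((0:ℝ):EReal)) := by
      intro hcon
      exact hsnot ((hmem_iff w hw0' s).2 ⟨hbP, by simpa [EReal.coe_zero] using hcon⟩)
    rcases eq_or_ne (G s) ⊤ with htop | htop
    · rw [htop, EReal.abs_top]; exact le_top
    · have hbot := (hGbot s).ne'
      lift G s to ℝ using ⟨htop, hbot⟩ with d hd
      have hcomb : G (H w⁻¹ s) ≤ ((w⁻¹*d + (1-w⁻¹)*(-M) : ℝ) : EReal) := by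
        rw [halg]
        exact hGconv s s₀ d (-M) w⁻¹ (by positivity) hwinv1 (le_of_eq hd.symm) hGs₀
      have hpos : (0:ℝ) < w⁻¹*d + (1-w⁻¹)*(-M) := by
        by_contra hle
        push_neg at hle
        exact hbG (le_trans hcomb (by exact_mod_cast EReal.coe_le_coe_iff.mpr hle))
      have hdlb : (w-1)*M ≤ d := by
        have h1 : (1-w⁻¹)*M < w⁻¹ * d := by nlinarith
        have h2 : w * ((1-w⁻¹)*M) ≤ w * (w⁻¹ * d) := by nlinarith
        have h4 : w * (w⁻¹ * d) = d := by field_simp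
        have h5 : w * ((1-w⁻¹)*M) = (w-1)*M := by
          rw [show w*((1-w⁻¹)*M) = (w - w*w⁻¹)*M by ring, mul_inv_cancel₀ hw0']
        linarith
      rw [EReal.abs_def]
      refine ENNReal.ofReal_le_ofReal (le_trans hdlb (le_abs_self d))
  -- the product sets
  set B1 : Set (ℝ × E') := {p | p.1 ∈ Ioo (0:ℝ) 1 ∧ (p.2 ∈ N ∧ H (p.1)⁻¹ p.2 ∈ N)}
    with hB1def
  set B2 : Set (ℝ × E') := {p | p.1 ∈ Ioo (1:ℝ) (1+t) ∧ ((p.2 ∈ P ∧ p.2 ∉ N) ∧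
    H (p.1)⁻¹ p.2 ∉ N)} with hB2def
  have hφ : Measurable (fun p : ℝ × E' => H (p.1)⁻¹ p.2) :=
    (measurable_fst.inv.smul (measurable_snd.sub measurable_const)).add measurable_const
  have hB1 : MeasurableSet B1 :=
    (measurable_fst measurableSet_Ioo).inter
      ((measurable_snd hNmeas).inter (hφ hNmeas))
  have hB2 : MeasurableSet B2 :=
    (measurable_fst measurableSet_Ioo).inter
      (((measurable_snd hPc.measurableSet).inter (measurable_snd hNmeas).compl).inter
        (hφ hNmeas).compl)
  -- Tonelli identity, negative part
  have key1 : ∫⁻ s in N, volume {v | v ∈ Ioo (0:ℝ) 1 ∧ s ∈ H v '' N} ∂volume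
      = ∫⁻ v in Ioo (0:ℝ) 1, volume (H v '' N) ∂volume := by
    have hsec2 : (fun s : E' => volume ((fun v : ℝ => (v, s)) ⁻¹' B1))
        = N.indicator (fun s => volume {v | v ∈ Ioo (0:ℝ) 1 ∧ s ∈ H v '' N}) := by
      funext s
      by_cases hs : s ∈ N
      · rw [indicator_of_mem hs]
        congr 1
        ext v
        simp only [mem_preimage, hB1def, mem_setOf_eq]
        constructor
        · rintro ⟨h1, _, h3⟩
          exact ⟨h1, (hmem_iff v (ne_of_gt h1.1) s).2 h3⟩
        · rintro ⟨h1, h2⟩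
          exact ⟨h1, hs, (hmem_iff v (ne_of_gt h1.1) s).1 h2⟩
      · rw [indicator_of_notMem hs]
        have : ((fun v : ℝ => (v, s)) ⁻¹' B1) = ∅ := by
          ext v; simp only [mem_preimage, hB1def, mem_setOf_eq, mem_empty_iff_false,
            iff_false]
          rintro ⟨_, h2, _⟩; exact hs h2
        rw [this, measure_empty]
    have hsec1 : (fun v : ℝ => volume (Prod.mk v ⁻¹' B1))
        = (Ioo (0:ℝ) 1).indicator (fun v => volume (H v '' N)) := by
      funext v
      by_cases hv : v ∈ Ioo (0:ℝ) 1
      · rw [indicator_of_mem hv]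
        congr 1
        ext s
        simp only [mem_preimage, hB1def, mem_setOf_eq]
        constructor
        · rintro ⟨_, _, h3⟩
          exact (hmem_iff v (ne_of_gt hv.1) s).2 h3
        · intro hs
          exact ⟨hv, hsub1 v hv.1.le hv.2.le hs, (hmem_iff v (ne_of_gt hv.1) s).1 hs⟩
      · rw [indicator_of_notMem hv]
        have : (Prod.mk v ⁻¹' B1) = ∅ := by
          ext s; simp only [mem_preimage, hB1def, mem_setOf_eq, mem_empty_iff_false,
            iff_false]
          rintro ⟨h1, _⟩; exact hv h1
        rw [this, measure_empty]
    calc ∫⁻ s in N, volume {v | v ∈ Ioo (0:ℝ) 1 ∧ s ∈ H v '' N} ∂volume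
        = ∫⁻ s, N.indicator (fun s => volume {v | v ∈ Ioo (0:ℝ) 1 ∧ s ∈ H v '' N}) s
          ∂volume := (lintegral_indicator hNmeas _).symm
      _ = ∫⁻ s, volume ((fun v : ℝ => (v, s)) ⁻¹' B1) ∂volume := by rw [hsec2]
      _ = (volume.prod volume) B1 := (Measure.prod_apply_symm hB1).symm
      _ = ∫⁻ v, volume (Prod.mk v ⁻¹' B1) ∂volume := Measure.prod_apply hB1
      _ = ∫⁻ v, (Ioo (0:ℝ) 1).indicator (fun v => volume (H v '' N)) v ∂volume := by
          rw [hsec1]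
      _ = ∫⁻ v in Ioo (0:ℝ) 1, volume (H v '' N) ∂volume :=
          lintegral_indicator measurableSet_Ioo _
  -- Tonelli identity, positive part
  have key2 : ∫⁻ s in P \ N, volume {w | w ∈ Ioo (1:ℝ) (1+t) ∧ s ∉ H w '' N} ∂volume
      = ∫⁻ w in Ioo (1:ℝ) (1+t), volume (P \ H w '' N) ∂volume := by
    have hsec2 : (fun s : E' => volume ((fun w : ℝ => (w, s)) ⁻¹' B2))
        = (P \ N).indicator
          (fun s => volume {w | w ∈ Ioo (1:ℝ) (1+t) ∧ s ∉ H w '' N}) := by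
      funext s
      by_cases hs : s ∈ P \ N
      · rw [indicator_of_mem hs]
        congr 1
        ext w
        simp only [mem_preimage, hB2def, mem_setOf_eq]
        constructor
        · rintro ⟨h1, _, h3⟩
          exact ⟨h1, fun hc => h3 ((hmem_iff w (by linarith [h1.1] : w ≠ 0) s).1 hc)⟩
        · rintro ⟨h1, h2⟩
          exact ⟨h1, ⟨hs.1, hs.2⟩,
            fun hc => h2 ((hmem_iff w (by linarith [h1.1] : w ≠ 0) s).2 hc)⟩
      · rw [indicator_of_notMem hs]
        have : ((fun w : ℝ => (w, s)) ⁻¹' B2) = ∅ := by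
          ext w; simp only [mem_preimage, hB2def, mem_setOf_eq, mem_empty_iff_false,
            iff_false]
          rintro ⟨_, h2, _⟩; exact hs ⟨h2.1, h2.2⟩
        rw [this, measure_empty]
    have hsec1 : (fun w : ℝ => volume (Prod.mk w ⁻¹' B2))
        = (Ioo (1:ℝ) (1+t)).indicator (fun w => volume (P \ H w '' N)) := by
      funext w
      by_cases hw : w ∈ Ioo (1:ℝ) (1+t)
      · rw [indicator_of_mem hw]
        congr 1
        ext s
        simp only [mem_preimage, hB2def, mem_setOf_eq, mem_diff]
        constructor
        · rintro ⟨_, h2, h3⟩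
          exact ⟨h2.1, fun hc => h3 ((hmem_iff w (by linarith [hw.1] : w ≠ 0) s).1 hc)⟩
        · rintro ⟨h1, h2⟩
          have hsN : s ∉ N := fun hc => h2 (hsub2 w hw.1.le hc)
          exact ⟨hw, ⟨h1, hsN⟩,
            fun hc => h2 ((hmem_iff w (by linarith [hw.1] : w ≠ 0) s).2 hc)⟩
      · rw [indicator_of_notMem hw]
        have : (Prod.mk w ⁻¹' B2) = ∅ := by
          ext s; simp only [mem_preimage, hB2def, mem_setOf_eq, mem_empty_iff_false,
            iff_false]
          rintro ⟨h1, _⟩; exact hw h1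
        rw [this, measure_empty]
    calc ∫⁻ s in P \ N, volume {w | w ∈ Ioo (1:ℝ) (1+t) ∧ s ∉ H w '' N} ∂volume
        = ∫⁻ s, (P \ N).indicator
            (fun s => volume {w | w ∈ Ioo (1:ℝ) (1+t) ∧ s ∉ H w '' N}) s ∂volume :=
          (lintegral_indicator (hPc.measurableSet.diff hNmeas) _).symm
      _ = ∫⁻ s, volume ((fun w : ℝ => (w, s)) ⁻¹' B2) ∂volume := by rw [hsec2]
      _ = (volume.prod volume) B2 := (Measure.prod_apply_symm hB2).symm
      _ = ∫⁻ w, volume (Prod.mk w ⁻¹' B2) ∂volume := Measure.prod_apply hB2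
      _ = ∫⁻ w, (Ioo (1:ℝ) (1+t)).indicator (fun w => volume (P \ H w '' N)) w
          ∂volume := by rw [hsec1]
      _ = ∫⁻ w in Ioo (1:ℝ) (1+t), volume (P \ H w '' N) ∂volume :=
          lintegral_indicator measurableSet_Ioo _
  -- pointwise measure bounds
  have ptw1 : ∀ s : E', ENNReal.ofReal M * volume {v | v ∈ Ioo (0:ℝ) 1 ∧ s ∈ H v '' N}
      ≤ (G s).abs := by
    intro s
    rcases eq_or_ne ((G s).abs) ⊤ with habs | habs
    · rw [habs]; exact le_top
    set a : ℝ := ((G s).abs).toReal with ha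
    have hsubset : {v | v ∈ Ioo (0:ℝ) 1 ∧ s ∈ H v '' N} ⊆ Ico (1 - a/M) 1 := by
      rintro v ⟨hv, hvmem⟩
      have h1 : (1-v)*M ≤ a :=
        (ENNReal.ofReal_le_iff_le_toReal habs).1 (hval1 v hv s hvmem)
      have h2 : (1-v) ≤ a/M := (le_div_iff₀ hM).2 h1
      exact ⟨by linarith, hv.2⟩
    calc ENNReal.ofReal M * volume {v | v ∈ Ioo (0:ℝ) 1 ∧ s ∈ H v '' N}
        ≤ ENNReal.ofReal M * volume (Ico (1 - a/M) 1) :=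
          mul_le_mul_right (measure_mono hsubset) _
      _ = ENNReal.ofReal M * ENNReal.ofReal (a/M) := by
          rw [Real.volume_Ico, show (1 - (1 - a/M) : ℝ) = a/M by ring]
      _ = ENNReal.ofReal (M * (a/M)) := (ENNReal.ofReal_mul hM.le).symm
      _ = (G s).abs := by
          rw [mul_comm, div_mul_cancel₀ a (ne_of_gt hM), ENNReal.ofReal_toReal habs]
  have ptw2 : ∀ s ∈ P, ENNReal.ofReal M *
      volume {w | w ∈ Ioo (1:ℝ) (1+t) ∧ s ∉ H w '' N} ≤ (G s).abs := by
    intro s hsP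
    rcases eq_or_ne ((G s).abs) ⊤ with habs | habs
    · rw [habs]; exact le_top
    set a : ℝ := ((G s).abs).toReal with ha
    have hsubset : {w | w ∈ Ioo (1:ℝ) (1+t) ∧ s ∉ H w '' N} ⊆ Ioc 1 (1 + a/M) := by
      rintro w ⟨hw, hwmem⟩
      have h1 : (w-1)*M ≤ a :=
        (ENNReal.ofReal_le_iff_le_toReal habs).1 (hval2 w hw s hsP hwmem)
      have h2 : (w-1) ≤ a/M := (le_div_iff₀ hM).2 h1
      exact ⟨hw.1, by linarith⟩
    calc ENNReal.ofReal M * volume {w | w ∈ Ioo (1:ℝ) (1+t) ∧ s ∉ H w '' N}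
        ≤ ENNReal.ofReal M * volume (Ioc (1:ℝ) (1 + a/M)) :=
          mul_le_mul_right (measure_mono hsubset) _
      _ = ENNReal.ofReal M * ENNReal.ofReal (a/M) := by
          rw [Real.volume_Ioc, show (1 + a/M - 1 : ℝ) = a/M by ring]
      _ = ENNReal.ofReal (M * (a/M)) := (ENNReal.ofReal_mul hM.le).symm
      _ = (G s).abs := by
          rw [mul_comm, div_mul_cancel₀ a (ne_of_gt hM), ENNReal.ofReal_toReal habs]
  -- lintegral computations
  have hIoo1 : ∫⁻ v in Ioo (0:ℝ) 1, ENNReal.ofReal (v^n) ∂volume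
      = ENNReal.ofReal (1/((n:ℝ)+1)) := by
    rw [← ofReal_integral_eq_lintegral_ofReal
      (((continuous_pow n).integrableOn_Icc).mono_set Ioo_subset_Icc_self)
      ((ae_restrict_iff' measurableSet_Ioo).2
        (ae_of_all _ fun v hv => pow_nonneg hv.1.le n))]
    congr 1
    rw [← MeasureTheory.integral_Ioc_eq_integral_Ioo,
      ← intervalIntegral.integral_of_le zero_le_one, integral_pow]
    simp
  have hIoo2 : ∫⁻ w in Ioo (1:ℝ) (1+t), ENNReal.ofReal (w^n) ∂volume
      = ENNReal.ofReal (1/((n:ℝ)+1)) := by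
    rw [← ofReal_integral_eq_lintegral_ofReal
      (((continuous_pow n).integrableOn_Icc).mono_set Ioo_subset_Icc_self)
      ((ae_restrict_iff' measurableSet_Ioo).2
        (ae_of_all _ fun w hw => pow_nonneg (by linarith [hw.1] : (0:ℝ) ≤ w) n))]
    congr 1
    rw [← MeasureTheory.integral_Ioc_eq_integral_Ioo,
      ← intervalIntegral.integral_of_le (by linarith : (1:ℝ) ≤ 1+t), integral_pow, hpow]
    norm_num
  set c₀ : ENNReal := ENNReal.ofReal (1/((n:ℝ)+1)) * volume N with hc₀
  have hmeaspow : Measurable (fun v : ℝ => ENNReal.ofReal (v^n)) :=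
    (measurable_id.pow_const n).ennreal_ofReal
  -- negative part estimate
  have hneg : ENNReal.ofReal M * c₀ ≤ ∫⁻ s in N, (G s).abs ∂volume := by
    calc ENNReal.ofReal M * c₀
        = ENNReal.ofReal M
            * ∫⁻ v in Ioo (0:ℝ) 1, ENNReal.ofReal (v^n) * volume N ∂volume := by
          rw [lintegral_mul_const _ hmeaspow, hIoo1]
      _ = ENNReal.ofReal M * ∫⁻ v in Ioo (0:ℝ) 1, volume (H v '' N) ∂volume := by
          congr 1
          refine (setLIntegral_congr_fun measurableSet_Ioo
            (fun v hv => ?_))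
          exact (hvolH v hv.1.le).symm
      _ = ENNReal.ofReal M
            * ∫⁻ s in N, volume {v | v ∈ Ioo (0:ℝ) 1 ∧ s ∈ H v '' N} ∂volume := by
          rw [key1]
      _ = ∫⁻ s in N, ENNReal.ofReal M
            * volume {v | v ∈ Ioo (0:ℝ) 1 ∧ s ∈ H v '' N} ∂volume :=
          (lintegral_const_mul' _ _ ENNReal.ofReal_ne_top).symm
      _ ≤ ∫⁻ s in N, (G s).abs ∂volume := lintegral_mono fun s => ptw1 s
  -- positive part estimate
  have hposest : ENNReal.ofReal M * (ENNReal.ofReal t * volume P - c₀)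
      ≤ ∫⁻ s in P \ N, (G s).abs ∂volume := by
    have hY : ENNReal.ofReal t * volume P
        ≤ (∫⁻ w in Ioo (1:ℝ) (1+t), volume (P \ H w '' N) ∂volume) + c₀ := by
      calc ENNReal.ofReal t * volume P
          = ∫⁻ _ in Ioo (1:ℝ) (1+t), volume P ∂volume := by
            rw [setLIntegral_const, Real.volume_Ioo, show (1+t-1:ℝ) = t by ring,
              mul_comm]
        _ ≤ ∫⁻ w in Ioo (1:ℝ) (1+t),
              (volume (P \ H w '' N) + ENNReal.ofReal (w^n) * volume N) ∂volume := by
            refine lintegral_mono_ae ((ae_restrict_iff' measurableSet_Ioo).2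
              (ae_of_all _ fun w hw => ?_))
            calc volume P ≤ volume ((P \ H w '' N) ∪ H w '' N) :=
                  measure_mono (by rw [diff_union_self]; exact subset_union_left)
              _ ≤ volume (P \ H w '' N) + volume (H w '' N) := measure_union_le _ _
              _ = _ := by rw [hvolH w (by linarith [hw.1])]
        _ = (∫⁻ w in Ioo (1:ℝ) (1+t), volume (P \ H w '' N) ∂volume) + c₀ := by
            rw [lintegral_add_right _ (hmeaspow.mul_const _),
              lintegral_mul_const _ hmeaspow, hIoo2]
    calc ENNReal.ofReal M * (ENNReal.ofReal t * volume P - c₀)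
        ≤ ENNReal.ofReal M
            * ∫⁻ w in Ioo (1:ℝ) (1+t), volume (P \ H w '' N) ∂volume :=
          mul_le_mul_right (tsub_le_iff_right.2 hY) _
      _ = ENNReal.ofReal M * ∫⁻ s in P \ N,
            volume {w | w ∈ Ioo (1:ℝ) (1+t) ∧ s ∉ H w '' N} ∂volume := by rw [key2]
      _ = ∫⁻ s in P \ N, ENNReal.ofReal M
            * volume {w | w ∈ Ioo (1:ℝ) (1+t) ∧ s ∉ H w '' N} ∂volume :=
          (lintegral_const_mul' _ _ ENNReal.ofReal_ne_top).symm
      _ ≤ ∫⁻ s in P \ N, (G s).abs ∂volume := by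
          refine lintegral_mono_ae ((ae_restrict_iff' (hPc.measurableSet.diff hNmeas)).2
            (ae_of_all _ fun s hs => ptw2 s hs.1))
  -- assembly
  have hsplit : ∫⁻ s in P, (G s).abs ∂volume
      = (∫⁻ s in N, (G s).abs ∂volume) + ∫⁻ s in P \ N, (G s).abs ∂volume := by
    rw [← lintegral_union (hPc.measurableSet.diff hNmeas) disjoint_sdiff_self_right,
      union_diff_cancel hNP]
  calc ENNReal.ofReal M * (ENNReal.ofReal t * volume P)
      ≤ ENNReal.ofReal M * (c₀ + (ENNReal.ofReal t * volume P - c₀)) :=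
        mul_le_mul_right le_add_tsub _
    _ = ENNReal.ofReal M * c₀
        + ENNReal.ofReal M * (ENNReal.ofReal t * volume P - c₀) := by rw [mul_add]
    _ ≤ (∫⁻ s in N, (G s).abs ∂volume) + ∫⁻ s in P \ N, (G s).abs ∂volume :=
        add_le_add hneg hposest
    _ = ∫⁻ s in P, (G s).abs ∂volume := hsplit.symm


set_option maxHeartbeats 1000000 in
/-- Let `P ⊂ ℝⁿ` be compact convex with nonempty interior and support
function `F_P`. Let `F, F₀ : ℝⁿ → ℝ` be convex functions whose subgradient images are
contained in `P`, let `G` be the Legendre transform of `F`, suppose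
`C_P := sup (F_P - F₀) < +∞` (i.e. `C_P` bounds `F_P - F₀` from above) and `|G|` is
Lebesgue integrable on `P`. Then
`sup (F - F₀) ≤ C_P + (1/((2^{1/(n+1)} - 1) vol(P))) ∫_P |G| dV`. -/
theorem sup_bound_via_legendre_L1
    (n : ℕ) (P : Set (EuclideanSpace ℝ (Fin n)))
    (hPc : IsCompact P) (hPconv : Convex ℝ P) (hPint : (interior P).Nonempty)
    (FP : EuclideanSpace ℝ (Fin n) → ℝ)
    (hFP : ∀ x, IsGreatest ((fun s => ⟪x, s⟫) '' P) (FP x))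
    (F F₀ : EuclideanSpace ℝ (Fin n) → ℝ)
    (hF : ConvexOn ℝ Set.univ F) (hF₀ : ConvexOn ℝ Set.univ F₀)
    (hsubF : ∀ x s, (∀ y, F x + ⟪y - x, s⟫ ≤ F y) → s ∈ P)
    (hsubF₀ : ∀ x s, (∀ y, F₀ x + ⟪y - x, s⟫ ≤ F₀ y) → s ∈ P)
    (G : EuclideanSpace ℝ (Fin n) → EReal)
    (hG : ∀ s, G s = ⨆ x, ((⟪x, s⟫ - F x : ℝ) : EReal))
    (CP : ℝ) (hCP : ∀ x, FP x - F₀ x ≤ CP)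
    (hint : ∫⁻ s in P, (G s).abs ∂volume ≠ ⊤) :
    ∀ x, F x - F₀ x ≤
      CP + ((2:ℝ) ^ (((n:ℝ) + 1))⁻¹ - 1)⁻¹ * ((volume P).toReal)⁻¹ *
        (∫⁻ s in P, (G s).abs ∂volume).toReal := by
  intro x
  set t : ℝ := (2:ℝ) ^ (((n:ℝ) + 1))⁻¹ - 1 with hte
  have h2gt : (1:ℝ) < (2:ℝ) ^ (((n:ℝ) + 1))⁻¹ := by
    rw [Real.one_lt_rpow_iff_of_pos (by norm_num)]
    left
    constructor
    · norm_num
    · positivity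
  have ht : 0 < t := by rw [hte]; linarith
  have hpow : ((1+t):ℝ)^(n+1) = 2 := by
    have h1 : (1:ℝ)+t = (2:ℝ) ^ (((n:ℝ)+1))⁻¹ := by rw [hte]; ring
    rw [h1, ← Real.rpow_natCast ((2:ℝ) ^ (((n:ℝ)+1))⁻¹) (n+1),
      ← Real.rpow_mul (by norm_num : (0:ℝ) ≤ 2)]
    rw [show (((n:ℝ)+1))⁻¹ * ((n+1 : ℕ) : ℝ) = 1 by
      push_cast
      field_simp]
    exact Real.rpow_one 2
  -- basic facts about G
  have hGbot : ∀ s, (⊥:EReal) < G s := by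
    intro s
    rw [hG s]
    exact lt_of_lt_of_le (EReal.bot_lt_coe _)
      (le_iSup (fun y => ((⟪y, s⟫ - F y : ℝ) : EReal)) 0)
  have hGconv : ∀ (a b : EuclideanSpace ℝ (Fin n)) (A B θ : ℝ), 0 ≤ θ → θ ≤ 1 →
      G a ≤ (A:EReal) → G b ≤ (B:EReal) →
      G (θ • a + (1-θ) • b) ≤ ((θ*A + (1-θ)*B : ℝ) : EReal) := by
    intro a b A B θ h0 h1 hA hB
    rw [hG]
    refine iSup_le fun y => ?_
    have ha' : ((⟪y, a⟫ - F y : ℝ) : EReal) ≤ G a := by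
      rw [hG a]
      exact le_iSup (fun z => ((⟪z, a⟫ - F z : ℝ) : EReal)) y
    have hb' : ((⟪y, b⟫ - F y : ℝ) : EReal) ≤ G b := by
      rw [hG b]
      exact le_iSup (fun z => ((⟪z, b⟫ - F z : ℝ) : EReal)) y
    have h2 : ⟪y, a⟫ - F y ≤ A := by exact_mod_cast ha'.trans hA
    have h3 : ⟪y, b⟫ - F y ≤ B := by exact_mod_cast hb'.trans hB
    have hinner : ⟪y, θ•a + (1-θ)•b⟫ = θ*⟪y,a⟫ + (1-θ)*⟪y,b⟫ := by
      rw [inner_add_right, real_inner_smul_right, real_inner_smul_right]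
    rw [EReal.coe_le_coe_iff, hinner]
    nlinarith [mul_le_mul_of_nonneg_left h2 h0,
      mul_le_mul_of_nonneg_left h3 (by linarith : (0:ℝ) ≤ 1-θ)]
  have hGmeas : Measurable G := by
    have hGeq : G = fun s => ⨆ y, ((⟪y, s⟫ - F y : ℝ) : EReal) := funext hG
    rw [hGeq]
    refine LowerSemicontinuous.measurable (lowerSemicontinuous_iSup fun y =>
      Continuous.lowerSemicontinuous ?_)
    exact continuous_coe_real_ereal.comp
      ((continuous_const.inner continuous_id).sub continuous_const)
  -- subgradient of F at x
  obtain ⟨s₀, hs₀⟩ := exists_subgradient F hF x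
  have hs₀P : s₀ ∈ P := hsubF x s₀ hs₀
  set M : ℝ := F x - ⟪x, s₀⟫ with hM
  have hGs₀ : G s₀ ≤ ((-M : ℝ) : EReal) := by
    rw [hG]
    refine iSup_le fun y => ?_
    rw [EReal.coe_le_coe_iff]
    have hy := hs₀ y
    have hinner : ⟪y - x, s₀⟫ = ⟪y,s₀⟫ - ⟪x,s₀⟫ := inner_sub_left y x s₀
    rw [hinner] at hy
    rw [hM]
    linarith
  have hFPx : ⟪x, s₀⟫ ≤ FP x := (hFP x).2 ⟨s₀, hs₀P, rfl⟩
  have hkey : F x - F₀ x ≤ CP + M := by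
    have := hCP x
    rw [hM]
    linarith
  set I : ℝ := (∫⁻ s in P, (G s).abs ∂volume).toReal with hI
  have hVlt : volume P < ⊤ := hPc.measure_lt_top
  have hVpos : 0 < volume P := Measure.measure_pos_of_nonempty_interior _ hPint
  have hVr : 0 < (volume P).toReal := ENNReal.toReal_pos hVpos.ne' hVlt.ne
  have hInn : (0:ℝ) ≤ I := ENNReal.toReal_nonneg
  have hterm : (0:ℝ) ≤ t⁻¹ * ((volume P).toReal)⁻¹ * I := by
    have h1 : (0:ℝ) ≤ t⁻¹ := inv_nonneg.2 ht.le
    have h2 : (0:ℝ) ≤ ((volume P).toReal)⁻¹ := inv_nonneg.2 hVr.le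
    exact mul_nonneg (mul_nonneg h1 h2) hInn
  rcases le_or_gt M 0 with hMle | hMpos
  · linarith
  · have hmain := measure_key P hPc hPconv G hGmeas hGbot hGconv s₀ hs₀P M hMpos hGs₀
      t ht hpow
    have h2 : (ENNReal.ofReal M * (ENNReal.ofReal t * volume P)).toReal ≤ I :=
      ENNReal.toReal_mono hint hmain
    rw [ENNReal.toReal_mul, ENNReal.toReal_mul, ENNReal.toReal_ofReal hMpos.le,
      ENNReal.toReal_ofReal ht.le] at h2
    have h3 : M ≤ t⁻¹ * ((volume P).toReal)⁻¹ * I := by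
      have h4 := mul_le_mul_of_nonneg_left h2
        (by positivity : (0:ℝ) ≤ t⁻¹ * ((volume P).toReal)⁻¹)
      have h5 : t⁻¹ * ((volume P).toReal)⁻¹ * (M * (t * (volume P).toReal)) = M := by
        rw [show t⁻¹ * ((volume P).toReal)⁻¹ * (M * (t * (volume P).toReal))
          = M * ((t⁻¹*t) * (((volume P).toReal)⁻¹ * (volume P).toReal)) by ring,
          inv_mul_cancel₀ ht.ne', inv_mul_cancel₀ hVr.ne', mul_one, mul_one]
      calc M = t⁻¹ * ((volume P).toReal)⁻¹ * (M * (t * (volume P).toReal)) := h5.symm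
        _ ≤ t⁻¹ * ((volume P).toReal)⁻¹ * I := h4
    linarith
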